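/- arXiv:2009.08578 — 4 statements merged into one kernel-verified Lean document; each statement's English description precedes it below -/
import Mathlib

section
/- The synchronous RCAM dynamics on {-1,+1}^N with a continuous nondecreasing activation function f admits a fixed point; in fact the state space is finite and the energy E(z) = -Σ_ξ F((1/N)⟨z, u^ξ⟩), where F is an antiderivative of f, is nonincreasing along trajectories, so the sequence of energies converges. -/
/-- Along any trajectory of the synchronous RCAM dynamics on `{-1,+1}^N`
with continuous nondecreasing activation `f` and antiderivative `F`, the
energy `E(z) = -Σ_ξ F((1/N)⟨z,u^ξ⟩)` is nonincreasing, and (the state space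
being finite) the sequence of energies is eventually constant. -/
theorem rcam_energy_nonincreasing_and_eventually_constant
    (N P : ℕ) (hN : 0 < N) (f F : ℝ → ℝ)
    (hf_cont : ContinuousOn f (Set.Icc (-1 : ℝ) 1))
    (hf_mono : MonotoneOn f (Set.Icc (-1 : ℝ) 1))
    (hF : ∀ x ∈ Set.Icc (-1 : ℝ) 1, HasDerivAt F (f x) x)
    (u : Fin P → Fin N → ℝ) (hu : ∀ ξ i, u ξ i = 1 ∨ u ξ i = -1)
    (z : ℕ → Fin N → ℝ) (hz : ∀ t i, z t i = 1 ∨ z t i = -1)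
    (hupdate : ∀ t i,
      (∑ ξ, f ((1 / (N : ℝ)) * ∑ j, z t j * u ξ j) * u ξ i) ≠ 0 →
        z (t + 1) i =
          Real.sign (∑ ξ, f ((1 / (N : ℝ)) * ∑ j, z t j * u ξ j) * u ξ i))
    (hupdate0 : ∀ t i,
      (∑ ξ, f ((1 / (N : ℝ)) * ∑ j, z t j * u ξ j) * u ξ i) = 0 →
        z (t + 1) i = z t i) :
    (∀ t, -(∑ ξ, F ((1 / (N : ℝ)) * ∑ j, z (t + 1) j * u ξ j)) ≤
          -(∑ ξ, F ((1 / (N : ℝ)) * ∑ j, z t j * u ξ j))) ∧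
    (∃ T, ∀ t, T ≤ t →
      -(∑ ξ, F ((1 / (N : ℝ)) * ∑ j, z t j * u ξ j)) =
      -(∑ ξ, F ((1 / (N : ℝ)) * ∑ j, z T j * u ξ j))) := by
  have hNpos : (0 : ℝ) < (N : ℝ) := by exact_mod_cast hN
  -- overlaps lie in [-1,1]
  have hm : ∀ (v : Fin N → ℝ), (∀ i, v i = 1 ∨ v i = -1) →
      ∀ ξ, (1 / (N : ℝ)) * ∑ j, v j * u ξ j ∈ Set.Icc (-1 : ℝ) 1 := by
    intro v hv ξ
    have habs : |∑ j, v j * u ξ j| ≤ (N : ℝ) := by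
      calc |∑ j, v j * u ξ j| ≤ ∑ j, |v j * u ξ j| := Finset.abs_sum_le_sum_abs _ _
        _ = ∑ _j : Fin N, (1 : ℝ) := by
            apply Finset.sum_congr rfl
            intro j _
            rcases hv j with h1 | h1 <;> rcases hu ξ j with h2 | h2 <;>
              simp [h1, h2]
        _ = (N : ℝ) := by simp
    have h1 : |(1 / (N : ℝ)) * ∑ j, v j * u ξ j| ≤ 1 := by
      rw [abs_mul, abs_of_pos (by positivity : (0:ℝ) < 1 / (N:ℝ))]
      rw [div_mul_eq_mul_div, one_mul, div_le_one hNpos]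
      exact habs
    constructor
    · linarith [neg_abs_le ((1 / (N : ℝ)) * ∑ j, v j * u ξ j)]
    · linarith [le_abs_self ((1 / (N : ℝ)) * ∑ j, v j * u ξ j)]
  -- F is continuous on [-1,1]
  have hFc : ContinuousOn F (Set.Icc (-1 : ℝ) 1) := fun x hx =>
    (hF x hx).continuousAt.continuousWithinAt
  -- convexity-type inequality
  have key : ∀ a ∈ Set.Icc (-1 : ℝ) 1, ∀ b ∈ Set.Icc (-1 : ℝ) 1,
      f a * (b - a) ≤ F b - F a := by
    intro a ha b hb
    rcases lt_trichotomy a b with hab | hab | hab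
    · obtain ⟨c, hc, hceq⟩ := exists_hasDerivAt_eq_slope F f hab
        (hFc.mono (Set.Icc_subset_Icc ha.1 hb.2))
        (fun x hx => hF x ⟨le_of_lt (lt_of_le_of_lt ha.1 hx.1),
          le_of_lt (lt_of_lt_of_le hx.2 hb.2)⟩)
      have hcmem : c ∈ Set.Icc (-1 : ℝ) 1 :=
        ⟨le_of_lt (lt_of_le_of_lt ha.1 hc.1), le_of_lt (lt_of_lt_of_le hc.2 hb.2)⟩
      have hfa : f a ≤ f c := hf_mono ha hcmem (le_of_lt hc.1)
      have hba : b - a ≠ 0 := sub_ne_zero.mpr (ne_of_lt hab).symm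
      rw [eq_div_iff hba] at hceq
      nlinarith
    · simp [hab]
    · obtain ⟨c, hc, hceq⟩ := exists_hasDerivAt_eq_slope F f hab
        (hFc.mono (Set.Icc_subset_Icc hb.1 ha.2))
        (fun x hx => hF x ⟨le_of_lt (lt_of_le_of_lt hb.1 hx.1),
          le_of_lt (lt_of_lt_of_le hx.2 ha.2)⟩)
      have hcmem : c ∈ Set.Icc (-1 : ℝ) 1 :=
        ⟨le_of_lt (lt_of_le_of_lt hb.1 hc.1), le_of_lt (lt_of_lt_of_le hc.2 ha.2)⟩
      have hfa : f c ≤ f a := hf_mono hcmem ha (le_of_lt hc.2)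
      have hba : a - b ≠ 0 := sub_ne_zero.mpr (ne_of_gt hab)
      rw [eq_div_iff hba] at hceq
      nlinarith
  -- the energy is nonincreasing
  have mono : ∀ t, -(∑ ξ, F ((1 / (N : ℝ)) * ∑ j, z (t + 1) j * u ξ j)) ≤
      -(∑ ξ, F ((1 / (N : ℝ)) * ∑ j, z t j * u ξ j)) := by
    intro t
    set m : Fin P → ℝ := fun ξ => (1 / (N : ℝ)) * ∑ j, z t j * u ξ j with hmdef
    set m' : Fin P → ℝ := fun ξ => (1 / (N : ℝ)) * ∑ j, z (t + 1) j * u ξ j with hm'def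
    set h : Fin N → ℝ := fun i => ∑ ξ, f (m ξ) * u ξ i with hhdef
    -- each coordinate gain is nonnegative
    have hcoord : ∀ i, 0 ≤ (z (t + 1) i - z t i) * h i := by
      intro i
      by_cases h0 : h i = 0
      · rw [hupdate0 t i h0, sub_self, zero_mul]
      · have hz' : z (t + 1) i = Real.sign (h i) := hupdate t i h0
        have habs : |z t i * h i| = |h i| := by
          rcases hz t i with h1 | h1 <;> simp [h1, abs_mul]
        have hle : z t i * h i ≤ |h i| := habs ▸ le_abs_self _
        have hsign : Real.sign (h i) * h i = |h i| := by
          rcases lt_trichotomy (h i) 0 with hlt | heq | hgt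
          · rw [Real.sign_of_neg hlt, abs_of_neg hlt]; ring
          · exact absurd heq h0
          · rw [Real.sign_of_pos hgt, abs_of_pos hgt]; ring
        rw [hz', sub_mul, hsign]
        linarith
    -- sum of coordinate gains equals the cross term
    have hcross : ∑ ξ, f (m ξ) * (m' ξ - m ξ) =
        (1 / (N : ℝ)) * ∑ i, (z (t + 1) i - z t i) * h i := by
      have step1 : ∀ ξ : Fin P, f (m ξ) * (m' ξ - m ξ) =
          ∑ i, (1 / (N : ℝ)) * ((z (t + 1) i - z t i) * (f (m ξ) * u ξ i)) := by
        intro ξ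
        have : m' ξ - m ξ = (1 / (N : ℝ)) *
            ∑ j, (z (t + 1) j * u ξ j - z t j * u ξ j) := by
          rw [Finset.sum_sub_distrib]
          simp only [hmdef, hm'def]
          ring
        rw [this]
        simp only [Finset.mul_sum]
        exact Finset.sum_congr rfl fun j _ => by ring
      calc ∑ ξ, f (m ξ) * (m' ξ - m ξ)
          = ∑ ξ, ∑ i, (1 / (N : ℝ)) * ((z (t + 1) i - z t i) * (f (m ξ) * u ξ i)) :=
            Finset.sum_congr rfl fun ξ _ => step1 ξ
        _ = ∑ i, ∑ ξ, (1 / (N : ℝ)) * ((z (t + 1) i - z t i) * (f (m ξ) * u ξ i)) :=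
            Finset.sum_comm
        _ = ∑ i, (1 / (N : ℝ)) * ((z (t + 1) i - z t i) * h i) := by
            refine Finset.sum_congr rfl fun i _ => ?_
            show _ = (1 / (N : ℝ)) * ((z (t + 1) i - z t i) * ∑ ξ, f (m ξ) * u ξ i)
            simp only [Finset.mul_sum]
        _ = (1 / (N : ℝ)) * ∑ i, (z (t + 1) i - z t i) * h i := by
            rw [Finset.mul_sum]
    have hcross_nonneg : 0 ≤ ∑ ξ, f (m ξ) * (m' ξ - m ξ) := by
      rw [hcross]
      apply mul_nonneg (by positivity)
      exact Finset.sum_nonneg fun i _ => hcoord i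
    have hsum : ∑ ξ, f (m ξ) * (m' ξ - m ξ) ≤ ∑ ξ, (F (m' ξ) - F (m ξ)) :=
      Finset.sum_le_sum fun ξ _ =>
        key (m ξ) (hm (z t) (hz t) ξ) (m' ξ) (hm (z (t + 1)) (hz (t + 1)) ξ)
    have : ∑ ξ, F (m ξ) ≤ ∑ ξ, F (m' ξ) := by
      rw [Finset.sum_sub_distrib] at hsum
      linarith
    simp only [hmdef, hm'def] at this
    linarith
  refine ⟨mono, ?_⟩
  -- eventual constancy
  set E : ℕ → ℝ := fun t => -(∑ ξ, F ((1 / (N : ℝ)) * ∑ j, z t j * u ξ j)) with hEdef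
  have hanti : Antitone E := antitone_nat_of_succ_le mono
  have hfin : (Set.range E).Finite := by
    have hsub : Set.range E ⊆
        (fun v : Fin N → ℝ => -(∑ ξ, F ((1 / (N : ℝ)) * ∑ j, v j * u ξ j))) ''
          (Set.pi Set.univ fun _ : Fin N => ({1, -1} : Set ℝ)) := by
      rintro x ⟨t, rfl⟩
      exact ⟨z t, fun i _ => by rcases hz t i with h1 | h1 <;> simp [h1], rfl⟩
    exact Set.Finite.subset
      ((Set.Finite.pi fun _ =>
        (Set.finite_singleton (-1:ℝ)).insert (1:ℝ)).image _) hsub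
  have hne : (Set.range E).Nonempty := ⟨E 0, 0, rfl⟩
  obtain ⟨x, hxmem, hxmin⟩ :=
    Set.Finite.exists_minimalFor id (Set.range E) hfin hne
  obtain ⟨T, hT⟩ := hxmem
  refine ⟨T, fun t ht => ?_⟩
  have h1 : E t ≤ x := hT ▸ hanti ht
  have h2 : x = E t := le_antisymm (hxmin ⟨t, rfl⟩ h1) h1
  have : E t = E T := by rw [← h2, hT]
  simpa [hEdef] using this
end

section
/- Under the RCAM update with a nondecreasing activation f, for any current state z and next state z', the inequality Σ_ξ f((1/N)⟨z,u^ξ⟩)·(⟨z',u^ξ⟩ - ⟨z,u^ξ⟩) ≥ 0 holds. -/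
/-- Under the RCAM update, for the current state `z` and the next state `z'`,
each term `a i * (z' i - z i)` is nonnegative, and consequently
`Σ_ξ w ξ * (⟨z',u^ξ⟩ - ⟨z,u^ξ⟩) ≥ 0`. -/
theorem rcam_update_increases_weighted_overlap
    (N P : ℕ) (hN : 0 < N) (f : ℝ → ℝ)
    (u : Fin P → Fin N → ℝ) (hu : ∀ ξ i, u ξ i = 1 ∨ u ξ i = -1)
    (z z' : Fin N → ℝ) (hz : ∀ i, z i = 1 ∨ z i = -1)
    (w : Fin P → ℝ) (hw : ∀ ξ, w ξ = f ((1 / (N : ℝ)) * ∑ j, z j * u ξ j))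
    (a : Fin N → ℝ) (ha : ∀ i, a i = ∑ ξ, w ξ * u ξ i)
    (hupd : ∀ i, a i ≠ 0 → z' i = Real.sign (a i))
    (hupd0 : ∀ i, a i = 0 → z' i = z i) :
    (∀ i, 0 ≤ a i * (z' i - z i)) ∧
    0 ≤ ∑ ξ, w ξ * ((∑ j, z' j * u ξ j) - (∑ j, z j * u ξ j)) := by
  have hterm : ∀ i, 0 ≤ a i * (z' i - z i) := by
    intro i
    by_cases h : a i = 0
    · simp [h]
    · rw [hupd i h]
      rcases lt_trichotomy (a i) 0 with hlt | heq | hgt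
      · rw [Real.sign_of_neg hlt]
        rcases hz i with hzi | hzi <;> rw [hzi] <;> nlinarith
      · exact absurd heq h
      · rw [Real.sign_of_pos hgt]
        rcases hz i with hzi | hzi <;> rw [hzi] <;> nlinarith
  refine ⟨hterm, ?_⟩
  have key : ∑ ξ, w ξ * ((∑ j, z' j * u ξ j) - (∑ j, z j * u ξ j))
      = ∑ i, a i * (z' i - z i) := by
    simp only [ha, Finset.sum_mul, mul_sub, ← Finset.sum_sub_distrib]
    rw [Finset.sum_comm]
    simp only [Finset.mul_sum]
    exact Finset.sum_congr rfl fun i _ => Finset.sum_congr rfl fun ξ _ => by ring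
  rw [key]
  exact Finset.sum_nonneg fun i _ => hterm i
end

section
/- If f is nondecreasing and F is a convex antiderivative of f, then for all x, x' ∈ [-1,1], F(x') - F(x) ≥ f(x)·(x' - x); consequently the RCAM energy decrease −ΔE = Σ_ξ [F(c'_ξ) - F(c_ξ)] is at least Σ_ξ f(c_ξ)·(c'_ξ - c_ξ) ≥ 0, where c_ξ = (1/N)⟨z,u^ξ⟩ and c'_ξ = (1/N)⟨z',u^ξ⟩ for a state z and its RCAM successor z'. -/
lemma rcam_grad_ineq (f F : ℝ → ℝ)
    (hf_mono : MonotoneOn f (Set.Icc (-1 : ℝ) 1))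
    (hF : ∀ x ∈ Set.Icc (-1 : ℝ) 1, HasDerivAt F (f x) x)
    {x x' : ℝ} (hx : x ∈ Set.Icc (-1 : ℝ) 1) (hx' : x' ∈ Set.Icc (-1 : ℝ) 1) :
    f x * (x' - x) ≤ F x' - F x := by
  have hFc : ContinuousOn F (Set.Icc (-1 : ℝ) 1) := fun y hy =>
    (hF y hy).continuousAt.continuousWithinAt
  rcases lt_trichotomy x x' with h | h | h
  · have hsub : Set.Icc x x' ⊆ Set.Icc (-1 : ℝ) 1 :=
      Set.Icc_subset_Icc hx.1 hx'.2
    obtain ⟨c, hc, hderiv⟩ := exists_hasDerivAt_eq_slope F f h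
      (hFc.mono hsub) (fun y hy => hF y (hsub (Set.mem_Icc.mpr ⟨hy.1.le, hy.2.le⟩)))
    have hcm : c ∈ Set.Icc (-1 : ℝ) 1 := hsub ⟨hc.1.le, hc.2.le⟩
    have hfx : f x ≤ f c := hf_mono hx hcm hc.1.le
    have hne : x' - x ≠ 0 := sub_ne_zero.mpr h.ne'
    have heq : F x' - F x = f c * (x' - x) := by
      rw [hderiv, div_mul_cancel₀ _ hne]
    rw [heq]
    nlinarith [sub_pos.mpr h]
  · simp [h]
  · have hsub : Set.Icc x' x ⊆ Set.Icc (-1 : ℝ) 1 :=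
      Set.Icc_subset_Icc hx'.1 hx.2
    obtain ⟨c, hc, hderiv⟩ := exists_hasDerivAt_eq_slope F f h
      (hFc.mono hsub) (fun y hy => hF y (hsub (Set.mem_Icc.mpr ⟨hy.1.le, hy.2.le⟩)))
    have hcm : c ∈ Set.Icc (-1 : ℝ) 1 := hsub ⟨hc.1.le, hc.2.le⟩
    have hfx : f c ≤ f x := hf_mono hcm hx hc.2.le
    have hne : x - x' ≠ 0 := sub_ne_zero.mpr h.ne'
    have heq : F x - F x' = f c * (x - x') := by
      rw [hderiv, div_mul_cancel₀ _ hne]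
    nlinarith [sub_pos.mpr h, heq]

/-- If `f` is continuous and nondecreasing on `[-1,1]` with antiderivative `F`
(hence `F` convex there), then `F x' - F x ≥ f x * (x' - x)` for `x, x'` in
`[-1,1]`; consequently, for a state `z` and its RCAM successor `z'`, the energy
decrease `-ΔE = Σ_ξ (F c'_ξ - F c_ξ)` is at least `Σ_ξ f(c_ξ) (c'_ξ - c_ξ) ≥ 0`,
where `c_ξ = (1/N)⟨z,u^ξ⟩` and `c'_ξ = (1/N)⟨z',u^ξ⟩`. -/
theorem rcam_energy_decrease_bound
    (N P : ℕ) (hN : 0 < N) (f F : ℝ → ℝ)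
    (hf_cont : ContinuousOn f (Set.Icc (-1 : ℝ) 1))
    (hf_mono : MonotoneOn f (Set.Icc (-1 : ℝ) 1))
    (hF : ∀ x ∈ Set.Icc (-1 : ℝ) 1, HasDerivAt F (f x) x)
    (u : Fin P → Fin N → ℝ) (hu : ∀ ξ i, u ξ i = 1 ∨ u ξ i = -1)
    (z z' : Fin N → ℝ) (hz : ∀ i, z i = 1 ∨ z i = -1)
    (hupd : ∀ i, (∑ ξ, f ((1 / (N : ℝ)) * ∑ j, z j * u ξ j) * u ξ i) ≠ 0 →
      z' i = Real.sign (∑ ξ, f ((1 / (N : ℝ)) * ∑ j, z j * u ξ j) * u ξ i))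
    (hupd0 : ∀ i, (∑ ξ, f ((1 / (N : ℝ)) * ∑ j, z j * u ξ j) * u ξ i) = 0 →
      z' i = z i) :
    (∀ x ∈ Set.Icc (-1 : ℝ) 1, ∀ x' ∈ Set.Icc (-1 : ℝ) 1,
      f x * (x' - x) ≤ F x' - F x) ∧
    (∑ ξ, f ((1 / (N : ℝ)) * ∑ j, z j * u ξ j) *
        ((1 / (N : ℝ)) * ∑ j, z' j * u ξ j - (1 / (N : ℝ)) * ∑ j, z j * u ξ j))
      ≤ ∑ ξ, (F ((1 / (N : ℝ)) * ∑ j, z' j * u ξ j) -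
              F ((1 / (N : ℝ)) * ∑ j, z j * u ξ j)) ∧
    0 ≤ ∑ ξ, f ((1 / (N : ℝ)) * ∑ j, z j * u ξ j) *
        ((1 / (N : ℝ)) * ∑ j, z' j * u ξ j - (1 / (N : ℝ)) * ∑ j, z j * u ξ j) := by
  have hNpos : (0 : ℝ) < N := Nat.cast_pos.mpr hN
  -- z' entries are ±1
  have hz' : ∀ i, z' i = 1 ∨ z' i = -1 := by
    intro i
    by_cases h : (∑ ξ, f ((1 / (N : ℝ)) * ∑ j, z j * u ξ j) * u ξ i) = 0
    · rw [hupd0 i h]; exact hz i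
    · rw [hupd i h]
      rcases lt_or_gt_of_ne h with hlt | hgt
      · right; exact Real.sign_of_neg hlt
      · left; exact Real.sign_of_pos hgt
  -- overlaps lie in [-1,1]
  have hmem : ∀ (w : Fin N → ℝ), (∀ i, w i = 1 ∨ w i = -1) → ∀ ξ,
      (1 / (N : ℝ)) * ∑ j, w j * u ξ j ∈ Set.Icc (-1 : ℝ) 1 := by
    intro w hw ξ
    have habs : |∑ j, w j * u ξ j| ≤ (N : ℝ) := by
      calc |∑ j, w j * u ξ j| ≤ ∑ j, |w j * u ξ j| := Finset.abs_sum_le_sum_abs _ _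
        _ = ∑ _j : Fin N, (1 : ℝ) := by
            apply Finset.sum_congr rfl
            intro j _
            rcases hw j with h1 | h1 <;> rcases hu ξ j with h2 | h2 <;>
              simp [h1, h2]
        _ = (N : ℝ) := by simp
    rw [Set.mem_Icc]
    rw [abs_le] at habs
    have hinv : (0:ℝ) ≤ 1 / (N:ℝ) := by positivity
    constructor
    · have := mul_le_mul_of_nonneg_left habs.1 hinv
      calc (-1:ℝ) = (1/(N:ℝ)) * (-(N:ℝ)) := by field_simp
        _ ≤ _ := this
    · have := mul_le_mul_of_nonneg_left habs.2 hinv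
      calc (1/(N:ℝ)) * ∑ j, w j * u ξ j ≤ (1/(N:ℝ)) * (N:ℝ) := this
        _ = 1 := by field_simp
  have key := fun {x x'} hx hx' => rcam_grad_ineq f F hf_mono hF (x := x) (x' := x') hx hx'
  refine ⟨fun x hx x' hx' => key hx hx', ?_, ?_⟩
  · apply Finset.sum_le_sum
    intro ξ _
    exact key (hmem z hz ξ) (hmem z' hz' ξ)
  · -- rewrite the sum by swapping order
    have hrw : (∑ ξ, f ((1 / (N : ℝ)) * ∑ j, z j * u ξ j) *
        ((1 / (N : ℝ)) * ∑ j, z' j * u ξ j - (1 / (N : ℝ)) * ∑ j, z j * u ξ j))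
        = (1 / (N : ℝ)) * ∑ i, (z' i - z i) *
            (∑ ξ, f ((1 / (N : ℝ)) * ∑ j, z j * u ξ j) * u ξ i) := by
      calc (∑ ξ, f ((1 / (N : ℝ)) * ∑ j, z j * u ξ j) *
            ((1 / (N : ℝ)) * ∑ j, z' j * u ξ j - (1 / (N : ℝ)) * ∑ j, z j * u ξ j))
          = ∑ ξ, ∑ i, (1/(N:ℝ)) * ((z' i - z i) *
              (f ((1 / (N : ℝ)) * ∑ j, z j * u ξ j) * u ξ i)) := by
            refine Finset.sum_congr rfl fun ξ _ => ?_
            set a := f ((1 / (N : ℝ)) * ∑ j, z j * u ξ j) with ha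
            rw [← mul_sub, ← Finset.sum_sub_distrib, Finset.mul_sum, Finset.mul_sum]
            exact Finset.sum_congr rfl fun i _ => by ring
        _ = ∑ i, ∑ ξ, (1/(N:ℝ)) * ((z' i - z i) *
              (f ((1 / (N : ℝ)) * ∑ j, z j * u ξ j) * u ξ i)) := Finset.sum_comm
        _ = (1 / (N : ℝ)) * ∑ i, (z' i - z i) *
              (∑ ξ, f ((1 / (N : ℝ)) * ∑ j, z j * u ξ j) * u ξ i) := by
            rw [Finset.mul_sum]
            refine Finset.sum_congr rfl fun i _ => ?_
            rw [Finset.mul_sum, Finset.mul_sum]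
    rw [hrw]
    apply mul_nonneg (by positivity)
    apply Finset.sum_nonneg
    intro i _
    set H := ∑ ξ, f ((1 / (N : ℝ)) * ∑ j, z j * u ξ j) * u ξ i with hH
    by_cases h : H = 0
    · simp [h]
    · have hz'i : z' i = Real.sign H := hupd i h
      have hzH : z i * H ≤ |H| := by
        rcases hz i with h1 | h1 <;> simp [h1] <;> [exact le_abs_self H; exact neg_le_abs H]
      have hz'H : z' i * H = |H| := by
        rcases lt_or_gt_of_ne h with hlt | hgt
        · rw [hz'i, Real.sign_of_neg hlt, abs_of_neg hlt]; ring
        · rw [hz'i, Real.sign_of_pos hgt, abs_of_pos hgt]; ring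
      nlinarith [hzH, hz'H]
end

section
/- If the energy E(z(t)) of the RCAM trajectory is constant from time t onward and f is strictly increasing, then z(t+1) is a fixed point of the RCAM update; hence every RCAM trajectory (synchronous update, strictly increasing continuous f) converges in finitely many steps to a fixed point. -/
lemma rcam_mem (N P : ℕ) (hN : 0 < N) (u : Fin P → Fin N → ℝ)
    (hu : ∀ ξ i, u ξ i = 1 ∨ u ξ i = -1) (v : Fin N → ℝ)
    (hv : ∀ i, v i = 1 ∨ v i = -1) (ξ : Fin P) :
    (1 / (N : ℝ)) * ∑ j, v j * u ξ j ∈ Set.Icc (-1 : ℝ) 1 := by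
  have hNpos : (0 : ℝ) < N := by exact_mod_cast hN
  have hterm : ∀ j : Fin N, v j * u ξ j ∈ Set.Icc (-1 : ℝ) 1 := by
    intro j
    rcases hv j with h1 | h1 <;> rcases hu ξ j with h2 | h2 <;>
      simp [h1, h2] <;> norm_num
  have hub : ∑ j, v j * u ξ j ≤ (N : ℝ) := by
    calc ∑ j, v j * u ξ j ≤ ∑ _j : Fin N, (1 : ℝ) :=
          Finset.sum_le_sum (fun j _ => (hterm j).2)
      _ = N := by simp
  have hlb : -(N : ℝ) ≤ ∑ j, v j * u ξ j := by
    calc -(N : ℝ) = ∑ _j : Fin N, (-1 : ℝ) := by simp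
      _ ≤ ∑ j, v j * u ξ j := Finset.sum_le_sum (fun j _ => (hterm j).1)
  constructor
  · rw [one_div, ← div_eq_inv_mul, le_div_iff₀ hNpos]
    linarith
  · rw [one_div, ← div_eq_inv_mul, div_le_one hNpos]
    exact hub

lemma rcam_gap (f F : ℝ → ℝ)
    (hf_mono : StrictMonoOn f (Set.Icc (-1 : ℝ) 1))
    (hF : ∀ x ∈ Set.Icc (-1 : ℝ) 1, HasDerivAt F (f x) x)
    {x y : ℝ} (hx : x ∈ Set.Icc (-1 : ℝ) 1) (hy : y ∈ Set.Icc (-1 : ℝ) 1) :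
    f x * (y - x) ≤ F y - F x := by
  have hFc : ContinuousOn F (Set.Icc (-1 : ℝ) 1) := fun w hw =>
    ((hF w hw).continuousAt).continuousWithinAt
  rcases lt_trichotomy x y with hxy | hxy | hxy
  · have hsub : Set.Icc x y ⊆ Set.Icc (-1 : ℝ) 1 := Set.Icc_subset_Icc hx.1 hy.2
    obtain ⟨c, hc, hceq⟩ := exists_hasDerivAt_eq_slope F f hxy (hFc.mono hsub)
      (fun w hw => hF w (hsub (Set.mem_Icc.mpr ⟨hw.1.le, hw.2.le⟩)))
    have hcmem : c ∈ Set.Icc (-1 : ℝ) 1 := hsub ⟨hc.1.le, hc.2.le⟩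
    have hfx : f x ≤ f c := hf_mono.monotoneOn hx hcmem hc.1.le
    rw [eq_div_iff (by linarith : y - x ≠ 0)] at hceq
    rw [← hceq]
    exact mul_le_mul_of_nonneg_right hfx (by linarith)
  · simp [hxy]
  · have hsub : Set.Icc y x ⊆ Set.Icc (-1 : ℝ) 1 := Set.Icc_subset_Icc hy.1 hx.2
    obtain ⟨c, hc, hceq⟩ := exists_hasDerivAt_eq_slope F f hxy (hFc.mono hsub)
      (fun w hw => hF w (hsub (Set.mem_Icc.mpr ⟨hw.1.le, hw.2.le⟩)))
    have hcmem : c ∈ Set.Icc (-1 : ℝ) 1 := hsub ⟨hc.1.le, hc.2.le⟩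
    have hfx : f c ≤ f x := hf_mono.monotoneOn hcmem hx hc.2.le
    rw [eq_div_iff (by linarith : x - y ≠ 0)] at hceq
    nlinarith [hceq]

lemma rcam_exchange (N P : ℕ) (u : Fin P → Fin N → ℝ) (v w : Fin N → ℝ)
    (g : Fin P → ℝ) :
    ∑ ξ, g ξ * ((1 / (N : ℝ)) * ∑ j, w j * u ξ j -
        (1 / (N : ℝ)) * ∑ j, v j * u ξ j)
      = (1 / (N : ℝ)) * ∑ i, (∑ ξ, g ξ * u ξ i) * (w i - v i) := by
  simp only [Finset.mul_sum, Finset.sum_mul, ← Finset.sum_sub_distrib, mul_sub]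
  rw [Finset.sum_comm]
  refine Finset.sum_congr rfl fun i _ => Finset.sum_congr rfl fun ξ _ => ?_
  ring

lemma rcam_step (N P : ℕ) (hN : 0 < N) (f F : ℝ → ℝ)
    (hf_mono : StrictMonoOn f (Set.Icc (-1 : ℝ) 1))
    (hF : ∀ x ∈ Set.Icc (-1 : ℝ) 1, HasDerivAt F (f x) x)
    (u : Fin P → Fin N → ℝ) (hu : ∀ ξ i, u ξ i = 1 ∨ u ξ i = -1)
    (z : ℕ → Fin N → ℝ) (hz : ∀ t i, z t i = 1 ∨ z t i = -1)
    (hupdate : ∀ t i,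
      (∑ ξ, f ((1 / (N : ℝ)) * ∑ j, z t j * u ξ j) * u ξ i) ≠ 0 →
        z (t + 1) i =
          Real.sign (∑ ξ, f ((1 / (N : ℝ)) * ∑ j, z t j * u ξ j) * u ξ i))
    (hupdate0 : ∀ t i,
      (∑ ξ, f ((1 / (N : ℝ)) * ∑ j, z t j * u ξ j) * u ξ i) = 0 →
        z (t + 1) i = z t i)
    (t : ℕ) (hne : z (t + 1) ≠ z t) :
    -(∑ ξ, F ((1 / (N : ℝ)) * ∑ j, z (t + 1) j * u ξ j)) <
      -(∑ ξ, F ((1 / (N : ℝ)) * ∑ j, z t j * u ξ j)) := by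
  have hNpos : (0 : ℝ) < N := by exact_mod_cast hN
  set m : Fin P → ℝ := fun ξ => (1 / (N : ℝ)) * ∑ j, z t j * u ξ j with hm
  set m' : Fin P → ℝ := fun ξ => (1 / (N : ℝ)) * ∑ j, z (t + 1) j * u ξ j with hm'
  set a : Fin N → ℝ := fun i => ∑ ξ, f (m ξ) * u ξ i with ha
  -- convexity bound per pattern
  have hgap : ∀ ξ : Fin P, f (m ξ) * (m' ξ - m ξ) ≤ F (m' ξ) - F (m ξ) := fun ξ =>
    rcam_gap f F hf_mono hF (rcam_mem N P hN u hu (z t) (hz t) ξ)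
      (rcam_mem N P hN u hu (z (t + 1)) (hz (t + 1)) ξ)
  -- exchange
  have hex : ∑ ξ, f (m ξ) * (m' ξ - m ξ)
      = (1 / (N : ℝ)) * ∑ i, a i * (z (t + 1) i - z t i) :=
    rcam_exchange N P u (z t) (z (t + 1)) (fun ξ => f (m ξ))
  -- each term nonneg, one positive
  have hnonneg : ∀ i : Fin N, 0 ≤ a i * (z (t + 1) i - z t i) := by
    intro i
    by_cases h0 : a i = 0
    · rw [h0]; ring_nf; exact le_refl 0
    · have hs := hupdate t i h0
      rcases lt_or_gt_of_ne h0 with hlt | hgt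
      · rw [Real.sign_of_neg hlt] at hs
        rcases hz t i with h1 | h1 <;> rw [hs, h1] <;> nlinarith
      · rw [Real.sign_of_pos hgt] at hs
        rcases hz t i with h1 | h1 <;> rw [hs, h1] <;> nlinarith
  obtain ⟨i₀, hi₀⟩ := Function.ne_iff.mp hne
  have ha0 : a i₀ ≠ 0 := fun h => hi₀ (hupdate0 t i₀ h)
  have hpos : 0 < a i₀ * (z (t + 1) i₀ - z t i₀) := by
    have hs := hupdate t i₀ ha0
    rcases lt_or_gt_of_ne ha0 with hlt | hgt
    · rw [Real.sign_of_neg hlt] at hs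
      rcases hz t i₀ with h1 | h1
      · rw [hs, h1]; nlinarith
      · exact absurd (hs.trans h1.symm) hi₀
    · rw [Real.sign_of_pos hgt] at hs
      rcases hz t i₀ with h1 | h1
      · exact absurd (hs.trans h1.symm) hi₀
      · rw [hs, h1]; nlinarith
  have hsumpos : 0 < ∑ i, a i * (z (t + 1) i - z t i) :=
    Finset.sum_pos' (fun i _ => hnonneg i) ⟨i₀, Finset.mem_univ i₀, hpos⟩
  have h1 : 0 < ∑ ξ, f (m ξ) * (m' ξ - m ξ) := by
    rw [hex]; positivity
  have h2 : ∑ ξ, f (m ξ) * (m' ξ - m ξ) ≤ ∑ ξ, (F (m' ξ) - F (m ξ)) :=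
    Finset.sum_le_sum (fun ξ _ => hgap ξ)
  rw [Finset.sum_sub_distrib] at h2
  linarith

/-- If the energy of the synchronous RCAM trajectory (strictly increasing
continuous activation `f`) is constant from time `t` onward, then `z (t+1)` is a
fixed point of the RCAM update; hence every trajectory converges in finitely
many steps to a fixed point. -/
theorem rcam_trajectory_converges_to_fixed_point
    (N P : ℕ) (hN : 0 < N) (f F : ℝ → ℝ)
    (hf_cont : ContinuousOn f (Set.Icc (-1 : ℝ) 1))
    (hf_mono : StrictMonoOn f (Set.Icc (-1 : ℝ) 1))
    (hF : ∀ x ∈ Set.Icc (-1 : ℝ) 1, HasDerivAt F (f x) x)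
    (u : Fin P → Fin N → ℝ) (hu : ∀ ξ i, u ξ i = 1 ∨ u ξ i = -1)
    (z : ℕ → Fin N → ℝ) (hz : ∀ t i, z t i = 1 ∨ z t i = -1)
    (hupdate : ∀ t i,
      (∑ ξ, f ((1 / (N : ℝ)) * ∑ j, z t j * u ξ j) * u ξ i) ≠ 0 →
        z (t + 1) i =
          Real.sign (∑ ξ, f ((1 / (N : ℝ)) * ∑ j, z t j * u ξ j) * u ξ i))
    (hupdate0 : ∀ t i,
      (∑ ξ, f ((1 / (N : ℝ)) * ∑ j, z t j * u ξ j) * u ξ i) = 0 →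
        z (t + 1) i = z t i) :
    (∀ t, (∀ s, t ≤ s →
        -(∑ ξ, F ((1 / (N : ℝ)) * ∑ j, z s j * u ξ j)) =
        -(∑ ξ, F ((1 / (N : ℝ)) * ∑ j, z t j * u ξ j))) →
      ∀ i, (∑ ξ, f ((1 / (N : ℝ)) * ∑ j, z (t + 1) j * u ξ j) * u ξ i) ≠ 0 →
        z (t + 1) i =
          Real.sign (∑ ξ, f ((1 / (N : ℝ)) * ∑ j, z (t + 1) j * u ξ j) * u ξ i)) ∧
    (∃ T, ∀ t, T ≤ t → z t = z T) := by
  -- energy of a configuration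
  set Eng : (Fin N → ℝ) → ℝ :=
    fun v => -(∑ ξ, F ((1 / (N : ℝ)) * ∑ j, v j * u ξ j)) with hEng
  have hstep : ∀ t, z (t + 1) ≠ z t → Eng (z (t + 1)) < Eng (z t) := fun t h =>
    rcam_step N P hN f F hf_mono hF u hu z hz hupdate hupdate0 t h
  constructor
  · -- fixed point part
    intro t hconst i hai
    have h12 : Eng (z (t + 1 + 1)) = Eng (z (t + 1)) := by
      simp only [hEng]
      rw [hconst (t + 1 + 1) (by omega), hconst (t + 1) (by omega)]
    have hzz : z (t + 1 + 1) = z (t + 1) := by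
      by_contra h
      exact absurd h12 (ne_of_lt (hstep (t + 1) h))
    have := hupdate (t + 1) i hai
    rw [hzz] at this
    exact this
  · -- convergence part
    have hfinS : (Set.pi Set.univ fun _ : Fin N => ({1, -1} : Set ℝ)).Finite :=
      Set.Finite.pi (fun _ => (Set.finite_singleton (-1 : ℝ)).insert 1)
    have hmemS : ∀ t, z t ∈ Set.pi Set.univ fun _ : Fin N => ({1, -1} : Set ℝ) := by
      intro t i _
      rcases hz t i with h | h <;> simp [h]
    have hfin : (Set.range fun t => Eng (z t)).Finite := by
      refine Set.Finite.subset (hfinS.image Eng) ?_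
      rintro x ⟨t, rfl⟩
      exact ⟨z t, hmemS t, rfl⟩
    have hne : (Set.range fun t => Eng (z t)).Nonempty := ⟨Eng (z 0), 0, rfl⟩
    have hne' : hfin.toFinset.Nonempty := by
      rwa [Set.Finite.toFinset_nonempty]
    obtain ⟨T, hT⟩ : ∃ T, Eng (z T) = hfin.toFinset.min' hne' := by
      have := hfin.toFinset.min'_mem hne'
      rw [Set.Finite.mem_toFinset] at this
      obtain ⟨T, hT⟩ := this
      exact ⟨T, hT⟩
    have hmin : ∀ t, Eng (z T) ≤ Eng (z t) := by
      intro t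
      rw [hT]
      exact hfin.toFinset.min'_le _ (by rw [Set.Finite.mem_toFinset]; exact ⟨t, rfl⟩)
    -- E is nonincreasing
    have hmono : ∀ t, Eng (z (t + 1)) ≤ Eng (z t) := by
      intro t
      by_cases h : z (t + 1) = z t
      · rw [h]
      · exact (hstep t h).le
    have hanti : ∀ s t, s ≤ t → Eng (z t) ≤ Eng (z s) := by
      intro s t hst
      induction t, hst using Nat.le_induction with
      | base => exact le_refl _
      | succ n hn ih => exact (hmono n).trans ih
    have hconstT : ∀ t, T ≤ t → Eng (z t) = Eng (z T) :=
      fun t ht => le_antisymm (hanti T t ht) (hmin t)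
    have hfix : ∀ t, T ≤ t → z (t + 1) = z t := by
      intro t ht
      by_contra h
      have := hstep t h
      rw [hconstT t ht, hconstT (t + 1) (by omega)] at this
      exact absurd this (lt_irrefl _)
    refine ⟨T, fun t ht => ?_⟩
    induction t, ht using Nat.le_induction with
    | base => rfl
    | succ n hn ih => rw [hfix n hn, ih]
end
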